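/- The 5×5 lower-triangular matrix S over Q(p,q), with diagonal entries (q^{-2}, -p^6, -1, p^2 q^2, p^{12}) and subdiagonal entries given by S_{2,1} = p^3 q^{-1}, S_{3,1} = -1, S_{3,2} = p^3 q - p^3 q^{-1}, S_{4,1} = p^{-3} q, S_{4,2} = -p^4 - q^2 + 1, S_{4,3} = p^5 q - p q + p^{-3} q, S_{5,1} = q^2, S_{5,2} = -p^7 q + p^7 q^{-1} - p^3 q^3 + p^3 q, S_{5,3} = p^{12} + p^8 q^2 - p^8 - p^4 q^2 + p^4 + q^2, S_{5,4} = p^9 q - p^9 q^{-1} + p^5 q^3 - p^5 q, satisfies (S P)^3 = p^{12}·Id, where P is the 5×5 antidiagonal permutation matrix with 1's at positions (i, 6-i). -/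
import Mathlib


/-- The explicit lower-triangular 5×5 braid matrix over `Q(p,q)`. -/
noncomputable def Smat {K : Type*} [Field K] (p q : K) : Matrix (Fin 5) (Fin 5) K :=
  !![q⁻¹ ^ 2, 0, 0, 0, 0;
     p ^ 3 * q⁻¹, -p ^ 6, 0, 0, 0;
     -1, p ^ 3 * q - p ^ 3 * q⁻¹, -1, 0, 0;
     p⁻¹ ^ 3 * q, -p ^ 4 - q ^ 2 + 1, p ^ 5 * q - p * q + p⁻¹ ^ 3 * q, p ^ 2 * q ^ 2, 0;
     q ^ 2, -(p ^ 7) * q + p ^ 7 * q⁻¹ - p ^ 3 * q ^ 3 + p ^ 3 * q,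
       p ^ 12 + p ^ 8 * q ^ 2 - p ^ 8 - p ^ 4 * q ^ 2 + p ^ 4 + q ^ 2,
       p ^ 9 * q - p ^ 9 * q⁻¹ + p ^ 5 * q ^ 3 - p ^ 5 * q, p ^ 12]

/-- The 5×5 antidiagonal permutation matrix with 1's at positions `(i, 6-i)` (1-indexed). -/
def Pmat {K : Type*} [Field K] : Matrix (Fin 5) (Fin 5) K :=
  Matrix.of fun i j => if (i : ℕ) + (j : ℕ) = 4 then 1 else 0

/-- Polynomial rescaling of `Smat * Pmat` by `p^3 * q^2`. -/
def Nmat {K : Type*} [Field K] (p q : K) : Matrix (Fin 5) (Fin 5) K :=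
  !![0, 0, 0, 0, p ^ 3;
     0, 0, 0, -(p ^ 9 * q ^ 2), p ^ 6 * q;
     0, 0, -(p ^ 3 * q ^ 2), p ^ 6 * q ^ 3 - p ^ 6 * q, -(p ^ 3 * q ^ 2);
     0, p ^ 5 * q ^ 4, p ^ 8 * q ^ 3 - p ^ 4 * q ^ 3 + q ^ 3,
       -(p ^ 7 * q ^ 2) - p ^ 3 * q ^ 4 + p ^ 3 * q ^ 2, q ^ 3;
     p ^ 15 * q ^ 2, p ^ 12 * q ^ 3 - p ^ 12 * q + p ^ 8 * q ^ 5 - p ^ 8 * q ^ 3,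
       p ^ 15 * q ^ 2 + p ^ 11 * q ^ 4 - p ^ 11 * q ^ 2 - p ^ 7 * q ^ 4 + p ^ 7 * q ^ 2 + p ^ 3 * q ^ 4,
       -(p ^ 10 * q ^ 3) + p ^ 10 * q - p ^ 6 * q ^ 5 + p ^ 6 * q ^ 3, p ^ 3 * q ^ 4]

lemma Pmat_eq {K : Type*} [Field K] :
    (Pmat : Matrix (Fin 5) (Fin 5) K) =
      !![0,0,0,0,1; 0,0,0,1,0; 0,0,1,0,0; 0,1,0,0,0; 1,0,0,0,0] := by
  ext i j
  fin_cases i <;> fin_cases j <;> rfl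

lemma smul_one_eq {K : Type*} [Field K] (c : K) :
    c • (1 : Matrix (Fin 5) (Fin 5) K) =
      !![c,0,0,0,0; 0,c,0,0,0; 0,0,c,0,0; 0,0,0,c,0; 0,0,0,0,c] := by
  ext i j
  fin_cases i <;> fin_cases j <;>
    simp (config := { decide := true }) [Matrix.one_apply, Matrix.vecHead, Matrix.vecTail]

set_option maxHeartbeats 1000000 in
lemma scaled_eq {K : Type*} [Field K] (p q : K) (hp : p ≠ 0) (hq : q ≠ 0) :
    (p ^ 3 * q ^ 2) • (Smat p q * Pmat) = Nmat p q := by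
  rw [Pmat_eq]
  ext i j
  fin_cases i <;> fin_cases j <;>
    · simp [Smat, Nmat, Matrix.mul_apply, Fin.sum_univ_five, inv_pow,
        Matrix.vecHead, Matrix.vecTail]
      try field_simp
      try ring

set_option maxHeartbeats 2000000 in
lemma Ncube {K : Type*} [Field K] (p q : K) :
    (Nmat p q) ^ 3 = ((p ^ 3 * q ^ 2) ^ 3 * p ^ 12) • (1 : Matrix (Fin 5) (Fin 5) K) := by
  rw [pow_succ, pow_succ, pow_one, smul_one_eq]
  ext i j
  fin_cases i <;> fin_cases j <;>
    · simp [Nmat, Matrix.mul_apply, Fin.sum_univ_five, Matrix.vecHead, Matrix.vecTail]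
      try ring
      try tauto

theorem stmt3 {K : Type*} [Field K] (p q : K) (hp : p ≠ 0) (hq : q ≠ 0) :
    (Smat p q * Pmat) ^ 3 = (p ^ 12) • (1 : Matrix (Fin 5) (Fin 5) K) := by
  have hc : (p ^ 3 * q ^ 2) ≠ 0 := mul_ne_zero (pow_ne_zero _ hp) (pow_ne_zero _ hq)
  have hA : Smat p q * Pmat = (p ^ 3 * q ^ 2)⁻¹ • Nmat p q := by
    rw [← scaled_eq p q hp hq, smul_smul, inv_mul_cancel₀ hc, one_smul]
  rw [hA, smul_pow, Ncube, smul_smul]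
  congr 1
  field_simp
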